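/- For the explicit piecewise linear density f, the middle part of the convolution is negligible uniformly on blocks: sup_{x ∈ (a_n, a_{n+1}]} (∫_{a_{m_n}}^{x − a_{m_n}} f(x−y) f(y) dy) / f(x) → 0 as n → ∞ (the integral being interpreted as 0 when x < 2 a_{m_n}). -/

import Mathlib

open MeasureTheory Filter Set

noncomputable section

/-- `a_n = 2^(n²)`. -/
def aSeq (n : ℕ) : ℝ := 2 ^ (n ^ 2)

/-- `m_n` : the least positive integer `k` with `k ≥ (√5/√6)·n`. -/
def mIdx (n : ℕ) : ℕ := max 1 ⌈(Real.sqrt 5 / Real.sqrt 6) * (n : ℝ)⌉₊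

/-- `b_n = a_n + a_{m_n}·(ln (n+1))²`. -/
def bSeq (n : ℕ) : ℝ := aSeq n + aSeq (mIdx n) * (Real.log ((n : ℝ) + 1)) ^ 2

/-- `c_n = (a_{n+1} + b_n)/2`. -/
def cSeq (n : ℕ) : ℝ := (aSeq (n + 1) + bSeq n) / 2

/-- `f` is affine (the linear interpolation of its endpoint values) on `[p, q]`. -/
def AffineOnIcc (f : ℝ → ℝ) (p q : ℝ) : Prop :=
  ∀ x ∈ Set.Icc p q, f x = f p + (x - p) / (q - p) * (f q - f p)

/-- The explicit continuous piecewise linear construction `f₀ : [0,∞) → (0,∞)`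
with `f₀(0) = 1`, `f₀(a_n) = 2 a_n⁻³`, `f₀(b_n) = 2 a_n⁻³ / ln(n+1)`,
`f₀(c_n) = 2 a_n⁻³`, affine on `[0,a₁]`, `[a_n,b_n]`, `[b_n,c_n]`, `[c_n,a_{n+1}]`. -/
def PWConstruction (f₀ : ℝ → ℝ) : Prop :=
  ContinuousOn f₀ (Set.Ici 0) ∧
  (∀ x : ℝ, 0 ≤ x → 0 < f₀ x) ∧
  f₀ 0 = 1 ∧
  (∀ n : ℕ, 1 ≤ n →
    f₀ (aSeq n) = 2 / (aSeq n) ^ 3 ∧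
    f₀ (bSeq n) = 2 / (aSeq n) ^ 3 / Real.log ((n : ℝ) + 1) ∧
    f₀ (cSeq n) = 2 / (aSeq n) ^ 3) ∧
  AffineOnIcc f₀ 0 (aSeq 1) ∧
  (∀ n : ℕ, 1 ≤ n →
    AffineOnIcc f₀ (aSeq n) (bSeq n) ∧
    AffineOnIcc f₀ (bSeq n) (cSeq n) ∧
    AffineOnIcc f₀ (cSeq n) (aSeq (n + 1)))

/-- The normalized extension `f = f₀ / ∫₀^∞ f₀(y) dy`, extended by `0` on `(-∞,0)`. -/
def normExt (f₀ : ℝ → ℝ) : ℝ → ℝ :=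
  fun x => if x < 0 then 0 else f₀ x / ∫ y in Set.Ici (0:ℝ), f₀ y

lemma aSeq_pos (n : ℕ) : 0 < aSeq n := by unfold aSeq; positivity

lemma aSeq_mono {n k : ℕ} (h : n ≤ k) : aSeq n ≤ aSeq k := by
  unfold aSeq
  exact pow_le_pow_right₀ one_le_two (Nat.pow_le_pow_left h 2)

lemma aSeq_lt {n k : ℕ} (h : n < k) : aSeq n < aSeq k := by
  unfold aSeq
  exact pow_lt_pow_right₀ one_lt_two (by nlinarith [Nat.pow_lt_pow_left h (n := 2) (by norm_num)])

lemma mIdx_pos (n : ℕ) : 1 ≤ mIdx n := le_max_left _ _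

lemma sqrt56_lt_one : Real.sqrt 5 / Real.sqrt 6 ≤ 1 := by
  rw [div_le_one (by positivity)]
  exact Real.sqrt_le_sqrt (by norm_num)

lemma mIdx_le {n : ℕ} (hn : 1 ≤ n) : mIdx n ≤ n := by
  unfold mIdx
  refine max_le hn (Nat.ceil_le.2 ?_)
  calc Real.sqrt 5 / Real.sqrt 6 * n ≤ 1 * n := by
        apply mul_le_mul_of_nonneg_right sqrt56_lt_one (by positivity)
    _ = n := one_mul _

lemma mIdx_sq (n : ℕ) : 5 * n ^ 2 ≤ 6 * (mIdx n) ^ 2 := by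
  have h1 : Real.sqrt 5 / Real.sqrt 6 * n ≤ (mIdx n : ℝ) := by
    refine le_trans (Nat.le_ceil _) ?_
    exact_mod_cast Nat.cast_le.2 (le_max_right 1 _)
  have h0 : (0:ℝ) ≤ Real.sqrt 5 / Real.sqrt 6 * n := by positivity
  have h2 : (Real.sqrt 5 / Real.sqrt 6 * n) ^ 2 ≤ (mIdx n : ℝ) ^ 2 := by
    exact pow_le_pow_left₀ h0 h1 2
  have h3 : (Real.sqrt 5 / Real.sqrt 6 * n) ^ 2 = 5 / 6 * n ^ 2 := by
    rw [mul_pow, div_pow, Real.sq_sqrt (by norm_num), Real.sq_sqrt (by norm_num)]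
  rw [h3] at h2
  have : (5:ℝ) * n ^ 2 ≤ 6 * (mIdx n)^2 := by nlinarith
  exact_mod_cast this

lemma nat_lt_two_pow_real (k : ℕ) : (k : ℝ) < 2 ^ k := by
  exact_mod_cast (Nat.lt_two_pow_self (n := k))

lemma log_le_self (n : ℕ) (hn : 1 ≤ n) : Real.log ((n:ℝ)+1) ≤ n := by
  have := Real.log_le_sub_one_of_pos (x := (n:ℝ)+1) (by positivity)
  linarith

lemma log_pos' (n : ℕ) (hn : 1 ≤ n) : 0 < Real.log ((n:ℝ)+1) := by
  apply Real.log_pos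
  have : (1:ℝ) ≤ (n:ℝ) := by exact_mod_cast hn
  linarith

lemma bSeq_lt (n : ℕ) (hn : 1 ≤ n) : bSeq n < aSeq (n+1) := by
  have hm : aSeq (mIdx n) ≤ aSeq n := aSeq_mono (mIdx_le hn)
  have hL : Real.log ((n:ℝ)+1) ≤ n := log_le_self n hn
  have hL0 : 0 ≤ Real.log ((n:ℝ)+1) := (log_pos' n hn).le
  have hL2 : (Real.log ((n:ℝ)+1))^2 ≤ (n:ℝ)^2 := pow_le_pow_left₀ hL0 hL 2
  have han : 0 < aSeq n := aSeq_pos n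
  have h1 : bSeq n ≤ aSeq n * (1 + (n:ℝ)^2) := by
    unfold bSeq
    have : aSeq (mIdx n) * (Real.log ((n:ℝ)+1))^2 ≤ aSeq n * (n:ℝ)^2 := by
      apply mul_le_mul hm hL2 (by positivity) han.le
    nlinarith
  have h2 : aSeq n * (1 + (n:ℝ)^2) < aSeq (n+1) := by
    have hsplit : aSeq (n+1) = aSeq n * 2 ^ (2*n+1) := by
      unfold aSeq; rw [← pow_add]; ring_nf
    rw [hsplit]
    have hn2 : (n:ℝ)^2 < (2:ℝ)^(2*n) := by
      have := nat_lt_two_pow_real n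
      have h0 : (0:ℝ) ≤ n := Nat.cast_nonneg n
      calc (n:ℝ)^2 < ((2:ℝ)^n)^2 := by nlinarith
        _ = 2 ^ (2*n) := by rw [← pow_mul]; ring_nf
    have hone : (1:ℝ) ≤ (2:ℝ)^(2*n) := one_le_pow₀ one_le_two
    have hss : (2:ℝ) ^ (2*n+1) = 2^(2*n) * 2 := pow_succ 2 (2*n)
    have : (1:ℝ) + (n:ℝ)^2 < 2 ^ (2*n+1) := by rw [hss]; linarith
    nlinarith
  linarith

lemma block_order (n : ℕ) (hn : 1 ≤ n) :
    aSeq n < bSeq n ∧ bSeq n < cSeq n ∧ cSeq n < aSeq (n+1) := by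
  have h1 : aSeq n < bSeq n := by
    unfold bSeq
    have h := mul_pos (aSeq_pos (mIdx n)) (pow_pos (log_pos' n hn) 2)
    linarith
  have h2 : bSeq n < aSeq (n+1) := bSeq_lt n hn
  refine ⟨h1, ?_, ?_⟩ <;> unfold cSeq <;> linarith

lemma affine_bounds {f : ℝ → ℝ} {p q : ℝ} (h : AffineOnIcc f p q) (hpq : p < q)
    {x : ℝ} (hx : x ∈ Set.Icc p q) :
    min (f p) (f q) ≤ f x ∧ f x ≤ max (f p) (f q) := by
  have heq := h x hx
  set t := (x - p) / (q - p) with ht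
  have ht0 : 0 ≤ t := div_nonneg (by linarith [hx.1]) (by linarith)
  have ht1 : t ≤ 1 := by
    rw [ht, div_le_one (by linarith)]; linarith [hx.2]
  rw [heq]
  rcases le_total (f p) (f q) with hle | hle
  · rw [min_eq_left hle, max_eq_right hle]
    constructor <;> nlinarith
  · rw [min_eq_right hle, max_eq_left hle]
    constructor <;> nlinarith

lemma cube_ratio (n : ℕ) (hn : 1 ≤ n) :
    aSeq n ^ 3 * Real.log ((n:ℝ)+1) ≤ aSeq (n+1) ^ 3 := by
  have hL : Real.log ((n:ℝ)+1) ≤ n := log_le_self n hn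
  have hn2 : (n:ℝ) < 2 ^ n := nat_lt_two_pow_real n
  have hpos : (0:ℝ) < aSeq n ^ 3 := pow_pos (aSeq_pos n) 3
  have hsplit : aSeq (n+1) ^ 3 = aSeq n ^ 3 * 2 ^ (6*n+3) := by
    unfold aSeq; rw [← pow_mul, ← pow_mul, ← pow_add]; ring_nf
  have h2 : (2:ℝ) ^ n ≤ 2 ^ (6*n+3) := pow_le_pow_right₀ one_le_two (by omega)
  rw [hsplit]
  have : Real.log ((n:ℝ)+1) ≤ 2 ^ (6*n+3) := by linarith
  nlinarith

/-- Lower bound for f₀ on a block. -/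
lemma f0_lower {f₀ : ℝ → ℝ} (hf₀ : PWConstruction f₀) (n : ℕ) (hn : 1 ≤ n)
    {x : ℝ} (hx : x ∈ Set.Icc (aSeq n) (aSeq (n+1))) :
    2 / aSeq (n+1) ^ 3 ≤ f₀ x := by
  obtain ⟨-, -, -, hvals, -, haff⟩ := hf₀
  obtain ⟨hv1, hv2, hv3⟩ := hvals n hn
  obtain ⟨ha1, ha2, ha3⟩ := haff n hn
  obtain ⟨o1, o2, o3⟩ := block_order n hn
  have hL : 0 < Real.log ((n:ℝ)+1) := log_pos' n hn
  have han : 0 < aSeq n := aSeq_pos n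
  have han1 : 0 < aSeq (n+1) := aSeq_pos (n+1)
  have hcube : aSeq n ^ 3 ≤ aSeq (n+1) ^ 3 :=
    pow_le_pow_left₀ han.le (aSeq_mono (by omega)) 3
  have hb1 : 2 / aSeq (n+1) ^ 3 ≤ 2 / aSeq n ^ 3 := by
    apply div_le_div_of_nonneg_left (by norm_num) (by positivity) hcube
  have hb2 : 2 / aSeq (n+1) ^ 3 ≤ 2 / aSeq n ^ 3 / Real.log ((n:ℝ)+1) := by
    rw [div_div]
    apply div_le_div_of_nonneg_left (by norm_num) (by positivity)
    exact cube_ratio n hn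
  rcases le_total x (bSeq n) with hxb | hxb
  · have := (affine_bounds ha1 o1 ⟨hx.1, hxb⟩).1
    rw [hv1, hv2] at this
    exact le_trans (le_min hb1 hb2) this
  · rcases le_total x (cSeq n) with hxc | hxc
    · have := (affine_bounds ha2 o2 ⟨hxb, hxc⟩).1
      rw [hv2, hv3] at this
      exact le_trans (le_min hb2 hb1) this
    · have := (affine_bounds ha3 o3 ⟨hxc, hx.2⟩).1
      have hnext : f₀ (aSeq (n+1)) = 2 / aSeq (n+1) ^ 3 := (hvals (n+1) (by omega)).1
      rw [hv3, hnext] at this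
      exact le_trans (le_min hb1 (le_refl _)) this

/-- Upper bound for f₀ on a single block, j ≥ 2. -/
lemma f0_upper_block {f₀ : ℝ → ℝ} (hf₀ : PWConstruction f₀) (j : ℕ) (hj : 2 ≤ j)
    {x : ℝ} (hx : x ∈ Set.Icc (aSeq j) (aSeq (j+1))) :
    f₀ x ≤ 2 / aSeq j ^ 3 := by
  obtain ⟨-, -, -, hvals, -, haff⟩ := hf₀
  have hj1 : 1 ≤ j := by omega
  obtain ⟨hv1, hv2, hv3⟩ := hvals j hj1
  obtain ⟨ha1, ha2, ha3⟩ := haff j hj1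
  obtain ⟨o1, o2, o3⟩ := block_order j hj1
  have hL : 1 ≤ Real.log ((j:ℝ)+1) := by
    rw [Real.le_log_iff_exp_le (by positivity)]
    have h3 : (3:ℝ) ≤ (j:ℝ)+1 := by
      have : (2:ℝ) ≤ (j:ℝ) := by exact_mod_cast hj
      linarith
    linarith [Real.exp_one_lt_d9, h3]
  have haj : 0 < aSeq j := aSeq_pos j
  have hv1pos : (0:ℝ) < 2 / aSeq j ^ 3 := by positivity
  have hb2 : 2 / aSeq j ^ 3 / Real.log ((j:ℝ)+1) ≤ 2 / aSeq j ^ 3 :=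
    div_le_self hv1pos.le hL
  have hb3 : 2 / aSeq (j+1) ^ 3 ≤ 2 / aSeq j ^ 3 := by
    apply div_le_div_of_nonneg_left (by norm_num) (by positivity)
    exact pow_le_pow_left₀ haj.le (aSeq_mono (by omega)) 3
  rcases le_total x (bSeq j) with hxb | hxb
  · have := (affine_bounds ha1 o1 ⟨hx.1, hxb⟩).2
    rw [hv1, hv2] at this
    exact le_trans this (max_le (le_refl _) hb2)
  · rcases le_total x (cSeq j) with hxc | hxc
    · have := (affine_bounds ha2 o2 ⟨hxb, hxc⟩).2
      rw [hv2, hv3] at this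
      exact le_trans this (max_le hb2 (le_refl _))
    · have := (affine_bounds ha3 o3 ⟨hxc, hx.2⟩).2
      rw [hv3] at this
      have hnext : f₀ (aSeq (j+1)) = 2 / aSeq (j+1) ^ 3 := (hvals (j+1) (by omega)).1
      rw [hnext] at this
      exact le_trans this (max_le (le_refl _) hb3)

/-- Global upper bound for f₀ on [a_m, ∞), m ≥ 2. -/
lemma f0_upper {f₀ : ℝ → ℝ} (hf₀ : PWConstruction f₀) (m : ℕ) (hm : 2 ≤ m)
    {x : ℝ} (hx : aSeq m ≤ x) : f₀ x ≤ 2 / aSeq m ^ 3 := by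
  have key : ∀ k : ℕ, ∀ y : ℝ, y ∈ Set.Icc (aSeq m) (aSeq (m+k)) → f₀ y ≤ 2 / aSeq m ^ 3 := by
    intro k
    induction k with
    | zero =>
      intro y hy
      have : y = aSeq m := le_antisymm (by simpa using hy.2) hy.1
      rw [this, (hf₀.2.2.2.1 m (by omega)).1]
    | succ k ih =>
      intro y hy
      rcases le_total y (aSeq (m+k)) with h | h
      · exact ih y ⟨hy.1, h⟩
      · have hblock := f0_upper_block hf₀ (m+k) (by omega) ⟨h, hy.2⟩
        refine le_trans hblock ?_
        apply div_le_div_of_nonneg_left (by norm_num) (pow_pos (aSeq_pos m) 3)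
        exact pow_le_pow_left₀ (aSeq_pos m).le (aSeq_mono (by omega)) 3
  obtain ⟨k, hk⟩ : ∃ k : ℕ, x ≤ aSeq (m+k) := by
    refine ⟨⌈x⌉₊, ?_⟩
    have h1 : x ≤ (⌈x⌉₊ : ℝ) := Nat.le_ceil x
    have h2 : ((⌈x⌉₊ : ℕ) : ℝ) < 2 ^ (⌈x⌉₊ : ℕ) := nat_lt_two_pow_real _
    have h3 : (2:ℝ) ^ (⌈x⌉₊ : ℕ) ≤ aSeq (m + ⌈x⌉₊) := by
      unfold aSeq
      exact pow_le_pow_right₀ one_le_two (by nlinarith [Nat.le_add_left ⌈x⌉₊ m])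
    linarith
  exact key k x ⟨hx, hk⟩

lemma aux_zero (f₀ : ℝ → ℝ) (f : ℝ → ℝ) (hfz : ∀ t, f t = 0) :
    Tendsto (fun n : ℕ =>
        sSup ((fun x : ℝ =>
          (∫ y in Set.Ioc (aSeq (mIdx n)) (x - aSeq (mIdx n)), f (x - y) * f y) / f x) ''
            Set.Ioc (aSeq n) (aSeq (n + 1)))) atTop (nhds 0) := by
  have hs : ∀ n : ℕ,
      sSup ((fun x : ℝ =>
          (∫ y in Set.Ioc (aSeq (mIdx n)) (x - aSeq (mIdx n)), f (x - y) * f y) / f x) ''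
            Set.Ioc (aSeq n) (aSeq (n + 1))) = 0 := by
    intro n
    have hfun : (fun x : ℝ =>
        (∫ y in Set.Ioc (aSeq (mIdx n)) (x - aSeq (mIdx n)), f (x - y) * f y) / f x)
        = fun _ => (0:ℝ) := by
      funext x; simp [hfz]
    rw [hfun, Set.Nonempty.image_const (Set.nonempty_Ioc.2 (aSeq_lt (by omega))), csSup_singleton]
  simp only [hs]
  exact tendsto_const_nhds

lemma aux_main (f₀ : ℝ → ℝ) (hf₀ : PWConstruction f₀) (I : ℝ) (hI : 0 < I)
    (f : ℝ → ℝ) (hf : ∀ t : ℝ, f t = if t < 0 then 0 else f₀ t / I) :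
    Tendsto (fun n : ℕ =>
        sSup ((fun x : ℝ =>
          (∫ y in Set.Ioc (aSeq (mIdx n)) (x - aSeq (mIdx n)), f (x - y) * f y) / f x) ''
            Set.Ioc (aSeq n) (aSeq (n + 1)))) atTop (nhds 0) := by
  have hfeq : ∀ t : ℝ, 0 ≤ t → f t = f₀ t / I := by
    intro t ht; rw [hf t, if_neg (not_lt.2 ht)]
  have hfnn : ∀ t : ℝ, 0 ≤ f t := by
    intro t; rw [hf t]
    split
    · exact le_refl 0
    · next h => exact div_nonneg (hf₀.2.1 t (not_lt.1 h)).le hI.le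
  -- the main pointwise bound
  have hmain : ∀ n : ℕ, 10 ≤ n → ∀ x ∈ Set.Ioc (aSeq n) (aSeq (n+1)),
      (∫ y in Set.Ioc (aSeq (mIdx n)) (x - aSeq (mIdx n)), f (x - y) * f y) / f x
        ≤ 2 / I * (1/2 : ℝ) ^ n := by
    intro n hn x hx
    set M := mIdx n with hM
    have h6m : 5 * n ^ 2 ≤ 6 * M ^ 2 := mIdx_sq n
    have hnsq : 100 ≤ n ^ 2 := by nlinarith
    have hM2 : 2 ≤ M := by
      by_contra h
      push_neg at h
      have h1 : M ^ 2 ≤ 1 := by nlinarith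
      omega
    have hexp : 4 * (n+1) ^ 2 + n ≤ 6 * M ^ 2 := by nlinarith
    have hn1 : 1 ≤ n := by omega
    have hpM : 0 < aSeq M := aSeq_pos M
    have hpn1 : 0 < aSeq (n+1) := aSeq_pos (n+1)
    have hx0 : (0:ℝ) < x := lt_trans (aSeq_pos n) hx.1
    -- lower bound on f x
    have hfxl : 2 / aSeq (n+1) ^ 3 / I ≤ f x := by
      rw [hfeq x hx0.le]
      have := f0_lower hf₀ n hn1 ⟨hx.1.le, hx.2⟩
      gcongr
    have hfxpos : 0 < f x := lt_of_lt_of_le (by positivity) hfxl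
    -- upper bound on f on [aSeq M, ∞)
    set C := 2 / aSeq M ^ 3 / I with hC
    have hCpos : 0 < C := by positivity
    have hfup : ∀ t : ℝ, aSeq M ≤ t → f t ≤ C := by
      intro t ht
      rw [hfeq t (le_trans hpM.le ht), hC]
      have := f0_upper hf₀ M hM2 ht
      gcongr
    -- bound the integral
    set J := ∫ y in Set.Ioc (aSeq M) (x - aSeq M), f (x - y) * f y with hJ
    have hJ0 : 0 ≤ J :=
      integral_nonneg fun y => mul_nonneg (hfnn _) (hfnn _)
    have hJup : J ≤ C ^ 2 * aSeq (n+1) := by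
      rcases le_or_gt (x - aSeq M) (aSeq M) with hempty | hlt
      · rw [hJ, Set.Ioc_eq_empty (not_lt.2 hempty), setIntegral_empty]
        positivity
      · by_cases hint : IntegrableOn (fun y => f (x - y) * f y) (Set.Ioc (aSeq M) (x - aSeq M)) volume
        · have hbd : ∀ y ∈ Set.Ioc (aSeq M) (x - aSeq M), f (x - y) * f y ≤ C ^ 2 := by
            intro y hy
            have h1 : f (x - y) ≤ C := hfup _ (by linarith [hy.2])
            have h2 : f y ≤ C := hfup _ hy.1.le
            have := mul_le_mul h1 h2 (hfnn y) hCpos.le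
            nlinarith
          have hconst : IntegrableOn (fun _ : ℝ => C ^ 2) (Set.Ioc (aSeq M) (x - aSeq M)) volume :=
            integrableOn_const measure_Ioc_lt_top.ne
          have hmono := setIntegral_mono_on hint hconst measurableSet_Ioc hbd
          rw [setIntegral_const] at hmono
          rw [hJ]
          refine le_trans hmono ?_
          rw [measureReal_def, Real.volume_Ioc, smul_eq_mul, ENNReal.toReal_ofReal (by linarith)]
          have hlen : x - aSeq M - aSeq M ≤ aSeq (n+1) := by linarith [hx.2, hpM]
          nlinarith [sq_nonneg C]
        · rw [hJ, integral_undef hint]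
          positivity
    -- combine
    have hd : (0:ℝ) < 2 / aSeq (n+1) ^ 3 / I := by positivity
    calc J / f x ≤ J / (2 / aSeq (n+1) ^ 3 / I) :=
          div_le_div_of_nonneg_left hJ0 hd hfxl
      _ ≤ (C ^ 2 * aSeq (n+1)) / (2 / aSeq (n+1) ^ 3 / I) := by gcongr
      _ = 2 * aSeq (n+1) ^ 4 / (aSeq M ^ 6 * I) := by
          rw [hC]; field_simp
      _ ≤ 2 / I * (1/2 : ℝ) ^ n := by
          have hp1 : aSeq (n+1) ^ 4 * 2 ^ n ≤ aSeq M ^ 6 := by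
            unfold aSeq
            rw [← pow_mul, ← pow_mul, ← pow_add]
            exact pow_le_pow_right₀ one_le_two (by nlinarith)
          have h2n : (0:ℝ) < 2 ^ n := by positivity
          rw [div_le_iff₀ (by positivity : (0:ℝ) < aSeq M ^ 6 * I)]
          have hrw : (2:ℝ) / I * (1/2) ^ n * (aSeq M ^ 6 * I) = 2 * (aSeq M ^ 6 / 2 ^ n) := by
            field_simp
            rw [← mul_pow]; norm_num
          rw [hrw]
          have : aSeq (n+1) ^ 4 ≤ aSeq M ^ 6 / 2 ^ n := (le_div_iff₀ h2n).2 hp1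
          linarith
  -- conclude by squeezing
  have hBnd : Tendsto (fun n : ℕ => 2 / I * (1/2 : ℝ) ^ n) atTop (nhds 0) := by
    have := (tendsto_pow_atTop_nhds_zero_of_lt_one (by norm_num : (0:ℝ) ≤ 1/2)
      (by norm_num : (1/2:ℝ) < 1)).const_mul (2 / I)
    simpa using this
  refine tendsto_of_tendsto_of_tendsto_of_le_of_le' tendsto_const_nhds hBnd ?_ ?_
  · filter_upwards [eventually_ge_atTop 10] with n hn
    have hmem : aSeq (n+1) ∈ Set.Ioc (aSeq n) (aSeq (n+1)) :=
      ⟨aSeq_lt (by omega), le_refl _⟩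
    have hmem' := Set.mem_image_of_mem (fun x : ℝ =>
      (∫ y in Set.Ioc (aSeq (mIdx n)) (x - aSeq (mIdx n)), f (x - y) * f y) / f x) hmem
    refine le_trans ?_ (le_csSup ⟨2 / I * (1/2:ℝ)^n, ?_⟩ hmem')
    · exact div_nonneg (integral_nonneg fun y => mul_nonneg (hfnn _) (hfnn _)) (hfnn _)
    · rintro r ⟨x, hxmem, rfl⟩
      exact hmain n hn x hxmem
  · filter_upwards [eventually_ge_atTop 10] with n hn
    apply Real.sSup_le
    · rintro r ⟨x, hxmem, rfl⟩
      exact hmain n hn x hxmem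
    · positivity

theorem pw_density_convolution_middle_negligible (f₀ : ℝ → ℝ)
    (hf₀ : PWConstruction f₀) (f : ℝ → ℝ) (hf : f = normExt f₀) :
    Tendsto (fun n : ℕ =>
        sSup ((fun x : ℝ =>
          (∫ y in Set.Ioc (aSeq (mIdx n)) (x - aSeq (mIdx n)), f (x - y) * f y) / f x) ''
            Set.Ioc (aSeq n) (aSeq (n + 1)))) atTop (nhds 0) := by
  have hInn : (0:ℝ) ≤ ∫ y in Set.Ici (0:ℝ), f₀ y :=
    setIntegral_nonneg measurableSet_Ici fun y hy => (hf₀.2.1 y hy).le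
  rcases eq_or_lt_of_le hInn with hI0 | hIpos
  · apply aux_zero f₀ f
    intro t
    rw [hf]
    unfold normExt
    split
    · rfl
    · rw [← hI0, div_zero]
  · exact aux_main f₀ hf₀ _ hIpos f (fun t => by rw [hf]; rfl)
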